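/- The Ramdas calibrator f(p) := (1/p − 1 + ln p) / (ln p)² for p ∈ (0,1), extended by f(1) := 1/2, satisfies ∫₀¹ f(p) dp = 1 (as a Lebesgue integral over (0,1)), and f is nonincreasing on (0,1]. -/

import Mathlib

open MeasureTheory ENNReal Set Filter Real Topology

-- Key inequality: log p ≤ 2(p-1)/(p+1) on (0,1]
lemma ramdas_key_log {p : ℝ} (hp0 : 0 < p) (hp1 : p ≤ 1) :
    Real.log p ≤ 2 * (p - 1) / (p + 1) := by
  set φ : ℝ → ℝ := fun x => Real.log x - 2 * (x - 1) / (x + 1) with hφ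
  have hderiv : ∀ x ∈ Set.Ioo (0:ℝ) 1, HasDerivAt φ (1/x - 4/(x+1)^2) x := by
    intro x hx
    have hx0 : x ≠ 0 := ne_of_gt hx.1
    have hx1 : x + 1 ≠ 0 := by nlinarith [hx.1]
    have h1 : HasDerivAt Real.log (1/x) x := by
      simpa [one_div] using Real.hasDerivAt_log hx0
    have h2 : HasDerivAt (fun x : ℝ => 2 * (x - 1) / (x + 1)) (4/(x+1)^2) x := by
      have := (((hasDerivAt_id x).sub_const 1).const_mul 2).fun_div
        ((hasDerivAt_id x).add_const 1) hx1
      refine this.congr_deriv ?_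
      simp only [id]
      ring
    exact h1.sub h2
  have hmono : MonotoneOn φ (Set.Ioc (0:ℝ) 1) := by
    apply monotoneOn_of_deriv_nonneg (convex_Ioc 0 1)
    · intro x hx
      have hx0 : x ≠ 0 := ne_of_gt hx.1
      have hx1 : (x:ℝ) + 1 ≠ 0 := by have := hx.1; positivity
      exact ((Real.continuousAt_log hx0).sub
        (((continuous_const.mul (continuous_id.sub continuous_const)).continuousAt).div
          ((continuous_id.add continuous_const)).continuousAt hx1)).continuousWithinAt
    · rw [interior_Ioc]
      intro x hx
      exact ((hderiv x hx).differentiableAt).differentiableWithinAt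
    · rw [interior_Ioc]
      intro x hx
      rw [(hderiv x hx).deriv]
      have h1 := hx.1
      have h2 := hx.2
      rw [sub_nonneg, div_le_div_iff₀ (by positivity) (by positivity)]
      nlinarith [sq_nonneg (x - 1)]
  rcases eq_or_lt_of_le hp1 with h | h
  · subst h; simp
  · have := hmono (Set.mem_Ioc.2 ⟨hp0, hp1⟩) (Set.mem_Ioc.2 ⟨one_pos, le_refl 1⟩) hp1
    have hφ1 : φ 1 = 0 := by simp [hφ]
    rw [hφ1] at this
    have : φ p ≤ 0 := this
    simpa [hφ, sub_nonpos] using this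

-- derivative of the main formula, with sign
lemma ramdas_g_deriv {p : ℝ} (hp0 : 0 < p) (hp1 : p < 1) :
    ∃ d, HasDerivAt (fun q : ℝ => (1/q - 1 + Real.log q)/(Real.log q)^2) d p ∧ d ≤ 0 := by
  have hpne : p ≠ 0 := ne_of_gt hp0
  have hL : Real.log p < 0 := Real.log_neg hp0 hp1
  have hLne : Real.log p ≠ 0 := ne_of_lt hL
  have hN : HasDerivAt (fun q : ℝ => 1/q - 1 + Real.log q) (-(1/p^2) + 1/p) p := by
    have h1 : HasDerivAt (fun q : ℝ => 1/q) (-(1/p^2)) p := by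
      simpa [one_div] using hasDerivAt_inv hpne
    simpa [one_div] using (h1.sub_const 1).fun_add (Real.hasDerivAt_log hpne)
  have hD : HasDerivAt (fun q : ℝ => (Real.log q)^2)
      (2 * Real.log p ^ 1 * (1/p)) p := by
    simpa [one_div] using (Real.hasDerivAt_log hpne).fun_pow 2
  have hDne : (Real.log p)^2 ≠ 0 := pow_ne_zero 2 hLne
  refine ⟨_, hN.div hD hDne, ?_⟩
  set L := Real.log p with hLdef
  have hnum : (-(1/p^2) + 1/p) * L^2 - (1/p - 1 + L) * (2 * L ^ 1 * (1/p))
      = (L / p^2) * (2*(p-1) - (p+1)*L) := by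
    field_simp
    ring
  rw [hnum]
  apply div_nonpos_of_nonpos_of_nonneg _ (by positivity)
  apply mul_nonpos_of_nonpos_of_nonneg
  · apply div_nonpos_of_nonpos_of_nonneg (le_of_lt hL) (by positivity)
  · have hkey := ramdas_key_log hp0 (le_of_lt hp1)
    rw [le_div_iff₀ (by positivity : (0:ℝ) < p + 1)] at hkey
    rw [hLdef]
    nlinarith

lemma ramdas_half_le {p : ℝ} (hp0 : 0 < p) (hp1 : p < 1) :
    (1:ℝ)/2 ≤ (1/p - 1 + Real.log p)/(Real.log p)^2 := by
  have hL : Real.log p < 0 := Real.log_neg hp0 hp1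
  have hy : (0:ℝ) ≤ -Real.log p := by linarith
  have hexp : Real.exp (-Real.log p) = 1/p := by
    rw [Real.exp_neg, Real.exp_log hp0, one_div]
  have hquad := Real.quadratic_le_exp_of_nonneg hy
  rw [hexp] at hquad
  have hL2 : (0:ℝ) < (Real.log p)^2 := by
    have : Real.log p ≠ 0 := ne_of_lt hL
    positivity
  rw [le_div_iff₀ hL2]
  nlinarith [sq_nonneg (Real.log p)]

lemma ramdas_f_hasDerivAt {f : ℝ → ℝ}
    (hf : ∀ p : ℝ, f p = if p = 1 then 1 / 2
      else (1 / p - 1 + Real.log p) / (Real.log p) ^ 2)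
    {p : ℝ} (hp : p ∈ Set.Ioo (0:ℝ) 1) :
    ∃ d, HasDerivAt f d p ∧ d ≤ 0 := by
  obtain ⟨d, hd, hd0⟩ := ramdas_g_deriv hp.1 hp.2
  refine ⟨d, ?_, hd0⟩
  apply hd.congr_of_eventuallyEq
  filter_upwards [isOpen_Ioo.mem_nhds hp] with q hq
  rw [hf q, if_neg (ne_of_lt hq.2)]

lemma ramdas_antitone {f : ℝ → ℝ}
    (hf : ∀ p : ℝ, f p = if p = 1 then 1 / 2
      else (1 / p - 1 + Real.log p) / (Real.log p) ^ 2) :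
    AntitoneOn f (Set.Ioo (0:ℝ) 1) := by
  apply antitoneOn_of_deriv_nonpos (convex_Ioo 0 1)
  · intro x hx
    obtain ⟨d, hd, _⟩ := ramdas_f_hasDerivAt hf hx
    exact hd.continuousAt.continuousWithinAt
  · rw [interior_Ioo]
    intro x hx
    obtain ⟨d, hd, _⟩ := ramdas_f_hasDerivAt hf hx
    exact hd.differentiableAt.differentiableWithinAt
  · rw [interior_Ioo]
    intro x hx
    obtain ⟨d, hd, hd0⟩ := ramdas_f_hasDerivAt hf hx
    rw [hd.deriv]; exact hd0

lemma ramdas_mono {f : ℝ → ℝ}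
    (hf : ∀ p : ℝ, f p = if p = 1 then 1 / 2
      else (1 / p - 1 + Real.log p) / (Real.log p) ^ 2) :
    ∀ p ∈ Set.Ioc (0 : ℝ) 1, ∀ q ∈ Set.Ioc (0 : ℝ) 1, p ≤ q → f q ≤ f p := by
  intro p hp q hq hpq
  rcases eq_or_lt_of_le hq.2 with hq1 | hq1
  · rw [hf q, if_pos hq1]
    rcases eq_or_lt_of_le hp.2 with hp1 | hp1
    · rw [hf p, if_pos hp1]
    · rw [hf p, if_neg (ne_of_lt hp1)]
      exact ramdas_half_le hp.1 hp1
  · have hp1 : p < 1 := lt_of_le_of_lt hpq hq1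
    exact ramdas_antitone hf ⟨hp.1, hp1⟩ ⟨hq.1, hq1⟩ hpq

noncomputable def ramdasF : ℝ → ℝ :=
  fun p => if p = 0 then 0 else if p = 1 then 1 else (p - 1) / Real.log p

lemma ramdasF_hasDerivAt {f : ℝ → ℝ}
    (hf : ∀ p : ℝ, f p = if p = 1 then 1 / 2
      else (1 / p - 1 + Real.log p) / (Real.log p) ^ 2)
    {x : ℝ} (hx : x ∈ Set.Ioo (0:ℝ) 1) :
    HasDerivAt ramdasF (f x) x := by
  have hx0 : x ≠ 0 := ne_of_gt hx.1
  have hx1 : x ≠ 1 := ne_of_lt hx.2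
  have hL : Real.log x < 0 := Real.log_neg hx.1 hx.2
  have hLne : Real.log x ≠ 0 := ne_of_lt hL
  have hG : HasDerivAt (fun q : ℝ => (q - 1) / Real.log q)
      ((1 * Real.log x - (x - 1) * x⁻¹) / (Real.log x) ^ 2) x :=
    ((hasDerivAt_id x).sub_const 1).div (Real.hasDerivAt_log hx0) hLne
  have heq : (1 * Real.log x - (x - 1) * x⁻¹) / (Real.log x) ^ 2 = f x := by
    rw [hf x, if_neg hx1]
    congr 1
    field_simp
    ring
  rw [heq] at hG
  apply hG.congr_of_eventuallyEq
  filter_upwards [isOpen_Ioo.mem_nhds hx] with q hq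
  rw [ramdasF, if_neg (ne_of_gt hq.1), if_neg (ne_of_lt hq.2)]

lemma ramdasF_continuousOn : ContinuousOn ramdasF (Set.Icc (0:ℝ) 1) := by
  intro x hx
  rcases eq_or_lt_of_le hx.1 with h0 | h0
  · -- x = 0
    subst h0
    rw [← continuousWithinAt_diff_self]
    have hF0 : ramdasF 0 = 0 := by simp [ramdasF]
    unfold ContinuousWithinAt
    rw [hF0]
    have hsub : Set.Icc (0:ℝ) 1 \ {0} ⊆ Set.Ioi 0 := by
      rintro q ⟨hq, hq0⟩
      exact lt_of_le_of_ne hq.1 (Ne.symm (by simpa using hq0))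
    apply Filter.Tendsto.mono_left _ (nhdsWithin_mono _ hsub)
    -- Tendsto ramdasF (𝓝[>] 0) (𝓝 0)
    have hlog : Filter.Tendsto Real.log (𝓝[>] (0:ℝ)) Filter.atBot :=
      Real.tendsto_log_nhdsGT_zero
    have hinv : Filter.Tendsto (fun q : ℝ => (Real.log q)⁻¹) (𝓝[>] (0:ℝ)) (𝓝 0) := by
      have h1 : Filter.Tendsto (fun q : ℝ => -Real.log q) (𝓝[>] (0:ℝ)) Filter.atTop :=
        Filter.tendsto_neg_atBot_atTop.comp hlog
      have h2 : Filter.Tendsto (fun q : ℝ => (-Real.log q)⁻¹) (𝓝[>] (0:ℝ)) (𝓝 0) :=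
        tendsto_inv_atTop_zero.comp h1
      have h3 := h2.neg
      simp only [neg_zero] at h3
      apply h3.congr
      intro q
      rw [← inv_neg, neg_neg]
    have hmul : Filter.Tendsto (fun q : ℝ => (q - 1) * (Real.log q)⁻¹) (𝓝[>] (0:ℝ))
        (𝓝 0) := by
      have hsub : Filter.Tendsto (fun q : ℝ => q - 1) (𝓝[>] (0:ℝ)) (𝓝 (0 - 1)) :=
        ((continuous_id.sub continuous_const).tendsto 0).mono_left nhdsWithin_le_nhds
      simpa using hsub.mul hinv
    apply hmul.congr'
    filter_upwards [Ioo_mem_nhdsGT_of_mem (Set.mem_Ico.2 ⟨le_refl (0:ℝ), one_pos⟩),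
      self_mem_nhdsWithin] with q hq hq'
    rw [ramdasF, if_neg (ne_of_gt hq.1), if_neg (ne_of_lt hq.2), div_eq_mul_inv]
  rcases eq_or_lt_of_le hx.2 with h1 | h1
  · -- x = 1
    subst h1
    rw [← continuousWithinAt_diff_self]
    have hF1 : ramdasF 1 = 1 := by norm_num [ramdasF]
    unfold ContinuousWithinAt
    rw [hF1]
    have hsub : Set.Icc (0:ℝ) 1 \ {1} ⊆ {(1:ℝ)}ᶜ := fun q hq => hq.2
    apply Filter.Tendsto.mono_left _ (nhdsWithin_mono _ hsub)
    -- Tendsto ramdasF (𝓝[≠] 1) (𝓝 1)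
    have hslope : Filter.Tendsto (slope Real.log 1) (𝓝[≠] (1:ℝ)) (𝓝 1) := by
      have := hasDerivAt_iff_tendsto_slope.1 (Real.hasDerivAt_log one_ne_zero)
      simpa using this
    have hinv : Filter.Tendsto (fun q : ℝ => (slope Real.log 1 q)⁻¹) (𝓝[≠] (1:ℝ))
        (𝓝 1) := by
      have := hslope.inv₀ one_ne_zero
      simpa using this
    apply hinv.congr'
    have hIoo : Set.Ioo (1/2 : ℝ) (3/2) ∈ 𝓝[≠] (1:ℝ) :=
      mem_nhdsWithin_of_mem_nhds (isOpen_Ioo.mem_nhds (by norm_num))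
    filter_upwards [hIoo, self_mem_nhdsWithin] with q hq hq'
    have hq1 : q ≠ 1 := hq'
    have hq0 : q ≠ 0 := by
      have := hq.1; intro h; rw [h] at this; norm_num at this
    rw [slope_def_field, div_eq_mul_inv, mul_inv, inv_inv, ramdasF,
      if_neg hq0, if_neg hq1]
    rw [Real.log_one, sub_zero, div_eq_mul_inv, mul_comm]
  · -- x ∈ Ioo 0 1
    exact (ramdasF_hasDerivAt (f := fun p => if p = 1 then 1 / 2
      else (1 / p - 1 + Real.log p) / (Real.log p) ^ 2) (fun _ => rfl)
      ⟨h0, h1⟩).continuousAt.continuousWithinAt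

/-- The Ramdas calibrator `f(p) = (1/p − 1 + ln p)/(ln p)²` for
`p ∈ (0,1)`, with `f(1) = 1/2`, integrates to exactly `1` over `(0,1)` (as a
Lebesgue integral) and is nonincreasing on `(0,1]`. -/
theorem ramdas_calibrator_is_calibrator
    (f : ℝ → ℝ)
    (hf : ∀ p : ℝ, f p = if p = 1 then 1 / 2
      else (1 / p - 1 + Real.log p) / (Real.log p) ^ 2) :
    (∫⁻ p in Set.Ioo (0 : ℝ) 1, ENNReal.ofReal (f p) = 1) ∧
    (∀ p ∈ Set.Ioc (0 : ℝ) 1, ∀ q ∈ Set.Ioc (0 : ℝ) 1, p ≤ q → f q ≤ f p) := by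
  refine ⟨?_, ramdas_mono hf⟩
  have hderiv : ∀ x ∈ Set.Ioo (0:ℝ) 1, HasDerivAt ramdasF (f x) x :=
    fun x hx => ramdasF_hasDerivAt hf hx
  have hnonneg : ∀ x ∈ Set.Ioo (0:ℝ) 1, 0 ≤ f x := by
    intro x hx
    rw [hf x, if_neg (ne_of_lt hx.2)]
    linarith [ramdas_half_le hx.1 hx.2]
  have hIntIoc : IntegrableOn f (Set.Ioc (0:ℝ) 1) :=
    intervalIntegral.integrableOn_deriv_of_nonneg ramdasF_continuousOn hderiv hnonneg
  have hIntIoo : IntegrableOn f (Set.Ioo (0:ℝ) 1) :=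
    hIntIoc.mono_set Set.Ioo_subset_Ioc_self
  have hval : ∫ y in (0:ℝ)..1, f y = 1 := by
    rw [intervalIntegral.integral_eq_sub_of_hasDerivAt_of_le zero_le_one
      ramdasF_continuousOn hderiv
      ((intervalIntegrable_iff_integrableOn_Ioc_of_le zero_le_one).2 hIntIoc)]
    norm_num [ramdasF]
  have hvalIoo : ∫ y in Set.Ioo (0:ℝ) 1, f y = 1 := by
    rw [← MeasureTheory.integral_Ioc_eq_integral_Ioo,
      ← intervalIntegral.integral_of_le zero_le_one]
    exact hval
  have hnn : 0 ≤ᵐ[volume.restrict (Set.Ioo (0:ℝ) 1)] f := by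
    filter_upwards [ae_restrict_mem measurableSet_Ioo] with x hx
    exact hnonneg x hx
  rw [← MeasureTheory.ofReal_integral_eq_lintegral_ofReal hIntIoo hnn, hvalIoo]
  norm_num
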